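/- arXiv:2111.11741 — 2 statements merged into one kernel-verified Lean document; each statement's English description precedes it below -/
import Mathlib

section
/- Let W ∈ ℝ^{p×p} be a real symmetric matrix with orthogonal diagonalization W = U D Uᵀ where U is orthogonal and D diagonal with diagonal entries λ_j satisfying 0 ≤ λ_j ≤ 1 for all j. Then lim_{m→∞} (I − W)^m s = U Z Uᵀ s for every s ∈ ℝ^p, where Z is the diagonal matrix with Z_jj = 1 if λ_j = 0 and Z_jj = 0 otherwise. -/
open Matrix

theorem DIF_convergence (p : ℕ) (W U : Matrix (Fin p) (Fin p) ℝ) (l : Fin p → ℝ)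
    (hWsymm : Wᵀ = W)
    (hU : U * Uᵀ = 1) (hU' : Uᵀ * U = 1)
    (hW : W = U * Matrix.diagonal l * Uᵀ)
    (hl : ∀ j, 0 ≤ l j ∧ l j ≤ 1) (s : Fin p → ℝ) :
    Filter.Tendsto (fun m : ℕ => ((1 - W) ^ m).mulVec s) Filter.atTop
      (nhds ((U * Matrix.diagonal (fun j => if l j = 0 then (1 : ℝ) else 0) * Uᵀ).mulVec s)) := by
  have key : ∀ m : ℕ, (1 - W) ^ m =
      U * Matrix.diagonal (fun j => (1 - l j) ^ m) * Uᵀ := by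
    intro m
    induction m with
    | zero => simp [Matrix.diagonal_one, hU]
    | succ n ih =>
      have h1 : (1 : Matrix (Fin p) (Fin p) ℝ) - W =
          U * Matrix.diagonal (fun j => 1 - l j) * Uᵀ := by
        have : Matrix.diagonal (fun j => (1:ℝ) - l j) =
            1 - Matrix.diagonal l := by
          ext i j
          by_cases h : i = j <;>
            simp [Matrix.one_apply, Matrix.diagonal_apply, h]
        rw [this, hW]
        simp [Matrix.mul_sub, Matrix.sub_mul, hU]
      rw [pow_succ, ih, h1]
      calc U * Matrix.diagonal (fun j => (1 - l j) ^ n) * Uᵀ *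
            (U * Matrix.diagonal (fun j => 1 - l j) * Uᵀ)
          = U * Matrix.diagonal (fun j => (1 - l j) ^ n) * (Uᵀ * U) *
            Matrix.diagonal (fun j => 1 - l j) * Uᵀ := by
            simp only [Matrix.mul_assoc]
        _ = U * (Matrix.diagonal (fun j => (1 - l j) ^ n) *
            Matrix.diagonal (fun j => 1 - l j)) * Uᵀ := by
            rw [hU']; simp only [Matrix.mul_assoc, Matrix.one_mul]
        _ = U * Matrix.diagonal (fun j => (1 - l j) ^ (n + 1)) * Uᵀ := by
            rw [Matrix.diagonal_mul_diagonal]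
            have : (fun j => (1 - l j) ^ n * (1 - l j)) =
                fun j => (1 - l j) ^ (n + 1) := by
              funext j; ring
            rw [this]
  simp only [key]
  have hdiag : Filter.Tendsto (fun m : ℕ => Matrix.diagonal (fun j => (1 - l j) ^ m))
      Filter.atTop (nhds (Matrix.diagonal (fun j => if l j = 0 then (1 : ℝ) else 0))) := by
    refine tendsto_pi_nhds.mpr ?_
    intro i
    rw [tendsto_pi_nhds]
    intro j
    by_cases hij : i = j
    · subst hij
      simp only [Matrix.diagonal_apply_eq]
      by_cases h0 : l i = 0
      · simp [h0]
      · simp only [h0, if_false]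
        apply tendsto_pow_atTop_nhds_zero_of_lt_one
        · linarith [(hl i).2]
        · have := (hl i).1
          rcases lt_or_eq_of_le this with h | h
          · linarith
          · exact absurd h.symm h0
    · simp only [Matrix.diagonal_apply_ne _ hij]
      exact tendsto_const_nhds
  have hcont : Continuous fun M : Matrix (Fin p) (Fin p) ℝ => (U * M * Uᵀ).mulVec s := by
    exact ((continuous_const.matrix_mul continuous_id).matrix_mul
      continuous_const).matrix_mulVec continuous_const
  have := (hcont.tendsto _).comp hdiag
  exact this
end

section
/- Let W ∈ ℝ^{p×p} be symmetric with eigenvalues λ_j ∈ [0,1], of which k are zero, diagonalized W = U D Uᵀ with U orthogonal. Let s ∈ ℝ^p, \tilde{s} = Uᵀ s, and δ > 0. If N ∈ ℕ satisfies N^N/(N+1)^{N+1} < δ/(‖\tilde{s}‖_∞ √(p−k)), then ‖(I−W)^{N+1} s − (I−W)^N s‖₂ < δ. -/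
open Matrix

lemma key_ineq (N : ℕ) {x : ℝ} (hx0 : 0 ≤ x) (hx1 : x ≤ 1) :
    x * (1 - x) ^ N ≤ (N : ℝ) ^ N / ((N : ℝ) + 1) ^ (N + 1) := by
  rcases Nat.eq_zero_or_pos N with rfl | hNpos
  · simpa using hx1
  have hnpos : (0:ℝ) < N := by exact_mod_cast hNpos
  have hnp1 : (0:ℝ) < (N:ℝ) + 1 := by linarith
  have hx1' : (0:ℝ) ≤ 1 - x := by linarith
  have hw₁ : (0:ℝ) ≤ 1 / ((N:ℝ) + 1) := by positivity
  have hw₂ : (0:ℝ) ≤ (N:ℝ) / ((N:ℝ) + 1) := by positivity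
  have hp₁ : (0:ℝ) ≤ ((N:ℝ) + 1) * x := by positivity
  have hp₂ : (0:ℝ) ≤ ((N:ℝ) + 1) * (1 - x) / (N:ℝ) := by positivity
  have hw : 1 / ((N:ℝ) + 1) + (N:ℝ) / ((N:ℝ) + 1) = 1 := by field_simp; ring
  have h := Real.geom_mean_le_arith_mean2_weighted hw₁ hw₂ hp₁ hp₂ hw
  have hsum : 1 / ((N:ℝ) + 1) * (((N:ℝ) + 1) * x)
      + (N:ℝ) / ((N:ℝ) + 1) * (((N:ℝ) + 1) * (1 - x) / (N:ℝ)) = 1 := by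
    field_simp; ring
  rw [hsum] at h
  have h2 : ((((N:ℝ)+1)*x) ^ (1/((N:ℝ)+1)) * ((((N:ℝ)+1)*(1-x)/(N:ℝ)) ^ ((N:ℝ)/((N:ℝ)+1)))) ^ ((N:ℝ)+1) ≤ 1 := by
    calc _ ≤ (1:ℝ) ^ ((N:ℝ)+1) := Real.rpow_le_rpow (by positivity) h hnp1.le
      _ = 1 := Real.one_rpow _
  rw [Real.mul_rpow (Real.rpow_nonneg hp₁ _) (Real.rpow_nonneg hp₂ _),
    ← Real.rpow_mul hp₁, ← Real.rpow_mul hp₂] at h2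
  have e1 : 1/((N:ℝ)+1) * ((N:ℝ)+1) = 1 := by field_simp
  have e2 : (N:ℝ)/((N:ℝ)+1) * ((N:ℝ)+1) = (N:ℝ) := by field_simp
  rw [e1, e2, Real.rpow_one, Real.rpow_natCast] at h2
  -- h2 : ((N+1)*x) * (((N+1)*(1-x)/N)^N) ≤ 1
  have hnN : (0:ℝ) < (N:ℝ) ^ N := pow_pos hnpos N
  have h5 : x * (1-x)^N * ((N:ℝ)+1)^(N+1) ≤ (N:ℝ)^N := by
    have h6 := mul_le_mul_of_nonneg_right h2 hnN.le
    rw [one_mul] at h6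
    calc x * (1-x)^N * ((N:ℝ)+1)^(N+1)
        = ((N:ℝ)+1)*x * (((N:ℝ)+1)*(1-x)/(N:ℝ))^N * (N:ℝ)^N := by
          rw [div_pow, mul_pow]; field_simp; ring
      _ ≤ (N:ℝ)^N := h6
  rw [le_div_iff₀ (by positivity)]
  exact h5

theorem DIF_stopping_criterion_bound (p : ℕ) (W U : Matrix (Fin p) (Fin p) ℝ)
    (l : Fin p → ℝ)
    (hWsymm : Wᵀ = W)
    (hU : U * Uᵀ = 1) (hU' : Uᵀ * U = 1)
    (hW : W = U * Matrix.diagonal l * Uᵀ)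
    (hl : ∀ j, 0 ≤ l j ∧ l j ≤ 1)
    (k : ℕ) (hk : k = (Finset.univ.filter (fun j => l j = 0)).card)
    (s : Fin p → ℝ) (δ : ℝ) (hδ : 0 < δ) (N : ℕ)
    (hN : (N : ℝ) ^ N / ((N : ℝ) + 1) ^ (N + 1)
        < δ / (‖Uᵀ.mulVec s‖ * Real.sqrt ((p : ℝ) - (k : ℝ)))) :
    Real.sqrt (∑ i, (((1 - W) ^ (N + 1)).mulVec s i - ((1 - W) ^ N).mulVec s i) ^ 2) < δ := by
  set c : ℝ := (N : ℝ) ^ N / ((N : ℝ) + 1) ^ (N + 1) with hc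
  set t : Fin p → ℝ := Uᵀ.mulVec s with ht
  -- c is positive
  have hcpos : 0 < c := by
    rcases Nat.eq_zero_or_pos N with rfl | hNpos
    · norm_num [hc]
    · have : (0:ℝ) < N := by exact_mod_cast hNpos
      positivity
  -- denominator is positive
  have hMpos : 0 < ‖t‖ * Real.sqrt ((p : ℝ) - (k : ℝ)) := by
    by_contra hle
    push_neg at hle
    have hdiv : 0 < δ / (‖t‖ * Real.sqrt ((p : ℝ) - (k : ℝ))) := hcpos.trans hN
    have : δ / (‖t‖ * Real.sqrt ((p : ℝ) - (k : ℝ))) ≤ 0 :=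
      div_nonpos_iff.mpr (Or.inl ⟨hδ.le, hle⟩)
    linarith
  have htpos : 0 < ‖t‖ :=
    lt_of_le_of_ne (norm_nonneg t) (by
      intro h
      rw [← h] at hMpos
      simp at hMpos)
  have hsqpos : 0 < Real.sqrt ((p : ℝ) - (k : ℝ)) := by
    rcases (Real.sqrt_nonneg ((p : ℝ) - (k : ℝ))).lt_or_eq with h | h
    · exact h
    · rw [← h] at hMpos; simp at hMpos
  -- matrix diagonalization of powers
  have h1W : (1 - W) = U * Matrix.diagonal (fun j => 1 - l j) * Uᵀ := by
    have : Matrix.diagonal (fun j => 1 - l j) = 1 - Matrix.diagonal l := by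
      rw [← Matrix.diagonal_one, ← Matrix.diagonal_sub]
    rw [this, hW]
    rw [Matrix.mul_sub, Matrix.sub_mul, Matrix.mul_one, hU]
  have hpow : ∀ m : ℕ, (1 - W) ^ m
      = U * Matrix.diagonal (fun j => (1 - l j) ^ m) * Uᵀ := by
    intro m
    induction m with
    | zero => simp [hU]
    | succ m ih =>
        rw [pow_succ, ih, h1W]
        have hd : (Matrix.diagonal fun j => (1 - l j) ^ m) * (Matrix.diagonal fun j => 1 - l j)
            = (Matrix.diagonal fun j => (1 - l j) ^ (m+1)) := by
          rw [Matrix.diagonal_mul_diagonal]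
          simp [pow_succ]
        simp only [Matrix.mul_assoc]
        rw [← Matrix.mul_assoc Uᵀ U _, hU', Matrix.one_mul,
          ← Matrix.mul_assoc (Matrix.diagonal fun j => (1 - l j) ^ m) _ Uᵀ, hd]
  -- rewrite the vector difference
  have hvec : ∀ i, ((1 - W) ^ (N + 1)).mulVec s i - ((1 - W) ^ N).mulVec s i
      = U.mulVec (fun j => -(l j * (1 - l j) ^ N * t j)) i := by
    intro i
    rw [hpow (N+1), hpow N]
    have e : ∀ m : ℕ, (U * Matrix.diagonal (fun j => (1 - l j) ^ m) * Uᵀ).mulVec s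
        = U.mulVec (fun j => (1 - l j) ^ m * t j) := by
      intro m
      have hdv : (Matrix.diagonal fun j => (1 - l j) ^ m).mulVec t
          = fun j => (1 - l j) ^ m * t j := by
        funext j
        rw [Matrix.mulVec_diagonal]
      rw [← Matrix.mulVec_mulVec, ← Matrix.mulVec_mulVec, hdv]
    rw [e, e]
    have := congrFun (Matrix.mulVec_sub U (fun j => (1 - l j) ^ (N+1) * t j)
      (fun j => (1 - l j) ^ N * t j)) i
    rw [Pi.sub_apply] at this
    rw [← this]
    congr 1
    funext j
    simp only [Pi.sub_apply]
    ring
  -- orthogonality: sum of squares preserved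
  set g : Fin p → ℝ := fun j => -(l j * (1 - l j) ^ N * t j) with hg
  have hsum : ∑ i, (((1 - W) ^ (N + 1)).mulVec s i - ((1 - W) ^ N).mulVec s i) ^ 2
      = ∑ j, (g j) ^ 2 := by
    simp_rw [hvec]
    have : ∑ i, (U.mulVec g i) ^ 2 = (U.mulVec g) ⬝ᵥ (U.mulVec g) := by
      simp [dotProduct, sq]
    rw [this, Matrix.dotProduct_mulVec, ← Matrix.mulVec_transpose,
      Matrix.mulVec_mulVec, hU']
    simp [dotProduct, sq, Matrix.one_mulVec]
  rw [hsum]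
  -- bound each term
  have hterm : ∀ j, (g j) ^ 2 ≤ if l j = 0 then 0 else (c * ‖t‖) ^ 2 := by
    intro j
    by_cases h0 : l j = 0
    · simp [hg, h0]
    · simp only [h0, if_false]
      have h1 : |g j| ≤ c * ‖t‖ := by
        rw [hg]
        have habs : |(-(l j * (1 - l j) ^ N * t j))| = (l j * (1 - l j) ^ N) * |t j| := by
          rw [abs_neg, abs_mul]
          congr 1
          rw [abs_of_nonneg]
          exact mul_nonneg (hl j).1 (pow_nonneg (by linarith [(hl j).2]) N)
        rw [habs]
        have h2 : l j * (1 - l j) ^ N ≤ c := key_ineq N (hl j).1 (hl j).2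
        have h3 : |t j| ≤ ‖t‖ := by
          have := norm_le_pi_norm t j
          simpa using this
        exact mul_le_mul h2 h3 (abs_nonneg _)
          (le_of_lt hcpos)
      calc (g j)^2 = |g j|^2 := (sq_abs _).symm
        _ ≤ (c * ‖t‖)^2 := by
            apply pow_le_pow_left₀ (abs_nonneg _) h1
  have hkle : k ≤ p := by
    rw [hk]
    exact le_trans (Finset.card_filter_le _ _) (by simp)
  have hcard : ((Finset.univ.filter (fun j => ¬ (l j = 0))).card : ℝ) = (p : ℝ) - (k : ℝ) := by
    have := Finset.card_filter_add_card_filter_not (s := (Finset.univ : Finset (Fin p)))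
      (p := fun j => l j = 0)
    simp only [Finset.card_univ, Fintype.card_fin] at this
    have hk' : (Finset.univ.filter (fun j => ¬ (l j = 0))).card = p - k := by omega
    rw [hk', Nat.cast_sub hkle]
  have hbound : ∑ j, (g j) ^ 2 ≤ ((p : ℝ) - (k : ℝ)) * (c * ‖t‖) ^ 2 := by
    calc ∑ j, (g j) ^ 2 ≤ ∑ j, (if l j = 0 then 0 else (c * ‖t‖) ^ 2) :=
          Finset.sum_le_sum (fun j _ => hterm j)
      _ = ∑ j ∈ Finset.univ.filter (fun j => ¬ (l j = 0)), (c * ‖t‖) ^ 2 := by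
          rw [Finset.sum_ite, Finset.sum_const, Finset.sum_const]
          simp
      _ = ((p : ℝ) - (k : ℝ)) * (c * ‖t‖) ^ 2 := by
          rw [Finset.sum_const, nsmul_eq_mul, hcard]
  have hfinal : Real.sqrt (∑ j, (g j) ^ 2)
      ≤ Real.sqrt ((p : ℝ) - (k : ℝ)) * (c * ‖t‖) := by
    calc Real.sqrt (∑ j, (g j) ^ 2)
        ≤ Real.sqrt (((p : ℝ) - (k : ℝ)) * (c * ‖t‖) ^ 2) := Real.sqrt_le_sqrt hbound
      _ = Real.sqrt ((p : ℝ) - (k : ℝ)) * (c * ‖t‖) := by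
          have hpk : (0:ℝ) < (p : ℝ) - (k : ℝ) := Real.sqrt_pos.mp hsqpos
          rw [Real.sqrt_mul hpk.le _, Real.sqrt_sq (by positivity)]
  refine lt_of_le_of_lt hfinal ?_
  have hlt : c * (‖t‖ * Real.sqrt ((p : ℝ) - (k : ℝ))) < δ := (lt_div_iff₀ hMpos).mp hN
  calc Real.sqrt ((p : ℝ) - (k : ℝ)) * (c * ‖t‖)
      = c * (‖t‖ * Real.sqrt ((p : ℝ) - (k : ℝ))) := by ring
    _ < δ := hlt
end
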